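/- arXiv:1509.03366 — 6 statements merged into one kernel-verified Lean document; each statement's English description precedes it below -/
import Mathlib

section
/- For every r > 0 with r ≠ exp(-π/√3), there exists a unique x ∈ (-5/6, 1/6) with x ≠ -2/3 such that (2+3x)·log r + log(2·cos(π(x+1/3))) = 0. Moreover x ∈ (-5/6, -2/3) if r < exp(-π/√3), and x ∈ (-2/3, 1/6) if r > exp(-π/√3). For r = exp(-π/√3), the only solution in (-5/6,1/6) is x = -2/3. -/
open Real Set Filter Topology

noncomputable def Fc (c : ℝ) (x : ℝ) : ℝ :=
  (2 + 3*x) * c + Real.log (2 * Real.cos (Real.pi * (x + 1/3)))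

noncomputable def xst (c : ℝ) : ℝ := Real.arctan (3*c/Real.pi) / Real.pi - 1/3

lemma angle_mem {x : ℝ} (hx : x ∈ Set.Ioo (-(5:ℝ)/6) (1/6)) :
    Real.pi * (x + 1/3) ∈ Set.Ioo (-(Real.pi/2)) (Real.pi/2) := by
  have hπ := Real.pi_pos
  obtain ⟨h1, h2⟩ := hx
  constructor
  · nlinarith [mul_pos hπ (show (0:ℝ) < x + 5/6 by linarith)]
  · nlinarith [mul_pos hπ (show (0:ℝ) < 1/6 - x by linarith)]

lemma cos_pos_aux {x : ℝ} (hx : x ∈ Set.Ioo (-(5:ℝ)/6) (1/6)) :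
    0 < Real.cos (Real.pi * (x + 1/3)) :=
  Real.cos_pos_of_mem_Ioo (angle_mem hx)

lemma xst_mem (c : ℝ) : xst c ∈ Set.Ioo (-(5:ℝ)/6) (1/6) := by
  have hπ := Real.pi_pos
  have h1 := Real.neg_pi_div_two_lt_arctan (3*c/Real.pi)
  have h2 := Real.arctan_lt_pi_div_two (3*c/Real.pi)
  unfold xst
  constructor
  · have : -(1/2 : ℝ) < Real.arctan (3*c/Real.pi) / Real.pi := by
      rw [lt_div_iff₀ hπ]; linarith
    linarith
  · have : Real.arctan (3*c/Real.pi) / Real.pi < (1/2 : ℝ) := by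
      rw [div_lt_iff₀ hπ]; linarith
    linarith

lemma tan_pi_xst (c : ℝ) : Real.tan (Real.pi * (xst c + 1/3)) = 3*c/Real.pi := by
  have hπ := Real.pi_ne_zero
  have h : Real.pi * (xst c + 1/3) = Real.arctan (3*c/Real.pi) := by
    unfold xst; field_simp; ring
  rw [h, Real.tan_arctan]

lemma hasDeriv (c : ℝ) {x : ℝ} (hx : x ∈ Set.Ioo (-(5:ℝ)/6) (1/6)) :
    HasDerivAt (Fc c) (3*c - Real.pi * Real.tan (Real.pi * (x + 1/3))) x := by
  have hcos := cos_pos_aux hx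
  have h1 : HasDerivAt (fun y : ℝ => Real.pi * (y + 1/3)) Real.pi x := by
    simpa using ((hasDerivAt_id x).add_const (1/3 : ℝ)).const_mul Real.pi
  have h2 : HasDerivAt (fun y : ℝ => 2 * Real.cos (Real.pi * (y + 1/3)))
      (2 * (-Real.sin (Real.pi * (x + 1/3)) * Real.pi)) x :=
    ((Real.hasDerivAt_cos _).comp x h1).const_mul 2
  have h3 := h2.log (by positivity)
  have h4 : HasDerivAt (fun y : ℝ => (2 + 3*y) * c) (3*c) x := by
    have h5 : HasDerivAt (fun y : ℝ => 2 + 3*y) 3 x := by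
      simpa using ((hasDerivAt_id x).const_mul (3:ℝ)).const_add (2:ℝ)
    simpa using h5.mul_const c
  have h6 := h4.add h3
  have h7 : HasDerivAt (Fc c) (3 * c + 2 * (-Real.sin (Real.pi * (x + 1/3)) * Real.pi) / (2 * Real.cos (Real.pi * (x + 1/3)))) x := h6
  convert h7 using 1
  rw [Real.tan_eq_sin_div_cos]
  have hne : Real.cos (Real.pi*(x+1/3)) ≠ 0 := ne_of_gt hcos
  field_simp
  ring

lemma contOn (c : ℝ) {s : Set ℝ} (hs : s ⊆ Set.Ioo (-(5:ℝ)/6) (1/6)) :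
    ContinuousOn (Fc c) s :=
  fun x hx => ((hasDeriv c (hs hx)).continuousAt).continuousWithinAt

lemma pi_mul_tan_lt {c : ℝ} {x : ℝ} (hx : x ∈ Set.Ioo (-(5:ℝ)/6) (1/6))
    (hlt : x < xst c) : Real.pi * Real.tan (Real.pi * (x + 1/3)) < 3*c := by
  have hπ := Real.pi_pos
  have htan : Real.tan (Real.pi*(x+1/3)) < Real.tan (Real.pi*(xst c + 1/3)) :=
    Real.strictMonoOn_tan (angle_mem hx) (angle_mem (xst_mem c))
      (by nlinarith)
  rw [tan_pi_xst] at htan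
  have h2 : Real.pi * Real.tan (Real.pi*(x+1/3)) < Real.pi * (3*c/Real.pi) :=
    mul_lt_mul_of_pos_left htan hπ
  rwa [mul_div_cancel₀ _ (ne_of_gt hπ)] at h2

lemma lt_pi_mul_tan {c : ℝ} {x : ℝ} (hx : x ∈ Set.Ioo (-(5:ℝ)/6) (1/6))
    (hlt : xst c < x) : 3*c < Real.pi * Real.tan (Real.pi * (x + 1/3)) := by
  have hπ := Real.pi_pos
  have htan : Real.tan (Real.pi*(xst c + 1/3)) < Real.tan (Real.pi*(x + 1/3)) :=
    Real.strictMonoOn_tan (angle_mem (xst_mem c)) (angle_mem hx)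
      (by nlinarith)
  rw [tan_pi_xst] at htan
  have h2 : Real.pi * (3*c/Real.pi) < Real.pi * Real.tan (Real.pi*(x+1/3)) :=
    mul_lt_mul_of_pos_left htan hπ
  rwa [mul_div_cancel₀ _ (ne_of_gt hπ)] at h2

lemma Fc_mono (c : ℝ) : StrictMonoOn (Fc c) (Set.Ioc (-(5:ℝ)/6) (xst c)) := by
  have hm := xst_mem c
  apply strictMonoOn_of_deriv_pos (convex_Ioc _ _)
  · exact contOn c (fun x hx => ⟨hx.1, lt_of_le_of_lt hx.2 hm.2⟩)
  · intro x hx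
    rw [interior_Ioc] at hx
    have hx' : x ∈ Set.Ioo (-(5:ℝ)/6) (1/6) := ⟨hx.1, hx.2.trans hm.2⟩
    rw [(hasDeriv c hx').deriv]
    have := pi_mul_tan_lt hx' hx.2
    linarith

lemma Fc_anti (c : ℝ) : StrictAntiOn (Fc c) (Set.Ico (xst c) (1/6)) := by
  have hm := xst_mem c
  apply strictAntiOn_of_deriv_neg (convex_Ico _ _)
  · exact contOn c (fun x hx => ⟨lt_of_lt_of_le hm.1 hx.1, hx.2⟩)
  · intro x hx
    rw [interior_Ico] at hx
    have hx' : x ∈ Set.Ioo (-(5:ℝ)/6) (1/6) := ⟨hm.1.trans hx.1, hx.2⟩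
    rw [(hasDeriv c hx').deriv]
    have := lt_pi_mul_tan hx' hx.1
    linarith

lemma Fc_neg23 (c : ℝ) : Fc c (-(2:ℝ)/3) = 0 := by
  unfold Fc
  have h1 : Real.pi * (-(2:ℝ)/3 + 1/3) = -(Real.pi/3) := by ring
  rw [h1, Real.cos_neg, Real.cos_pi_div_three]
  norm_num

lemma tendsto_right (c : ℝ) : Tendsto (Fc c) (𝓝[<] (1/6 : ℝ)) atBot := by
  have hA : Tendsto (fun x : ℝ => (2+3*x)*c) (𝓝[<] (1/6:ℝ)) (𝓝 ((2+3*(1/6:ℝ))*c)) :=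
    (((by continuity : Continuous fun x : ℝ => (2+3*x)*c)).tendsto _).mono_left
      nhdsWithin_le_nhds
  have hB0 : Tendsto (fun x : ℝ => 2 * Real.cos (Real.pi*(x+1/3))) (𝓝 (1/6:ℝ)) (𝓝 0) := by
    have hco : Continuous fun x : ℝ => 2*Real.cos (Real.pi*(x+1/3)) := by continuity
    have h := hco.tendsto (1/6:ℝ)
    convert h using 2
    rw [show Real.pi*((1:ℝ)/6+1/3) = Real.pi/2 by ring, Real.cos_pi_div_two]
    ring
  have hB : Tendsto (fun x : ℝ => 2 * Real.cos (Real.pi*(x+1/3))) (𝓝[<] (1/6:ℝ)) (𝓝[>] 0) := by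
    rw [tendsto_nhdsWithin_iff]
    refine ⟨hB0.mono_left nhdsWithin_le_nhds, ?_⟩
    filter_upwards [Ioo_mem_nhdsLT_of_mem
      (show (1/6:ℝ) ∈ Set.Ioc (-(5:ℝ)/6) (1/6) by norm_num)] with x hx
    exact mul_pos two_pos (cos_pos_aux hx)
  have hC := Real.tendsto_log_nhdsGT_zero.comp hB
  exact hA.add_atBot hC

lemma tendsto_left (c : ℝ) : Tendsto (Fc c) (𝓝[>] (-(5:ℝ)/6)) atBot := by
  have hA : Tendsto (fun x : ℝ => (2+3*x)*c) (𝓝[>] (-(5:ℝ)/6)) (𝓝 ((2+3*(-(5:ℝ)/6))*c)) :=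
    (((by continuity : Continuous fun x : ℝ => (2+3*x)*c)).tendsto _).mono_left
      nhdsWithin_le_nhds
  have hB0 : Tendsto (fun x : ℝ => 2 * Real.cos (Real.pi*(x+1/3))) (𝓝 (-(5:ℝ)/6)) (𝓝 0) := by
    have hco : Continuous fun x : ℝ => 2*Real.cos (Real.pi*(x+1/3)) := by continuity
    have h := hco.tendsto (-(5:ℝ)/6)
    convert h using 2
    rw [show Real.pi*(-(5:ℝ)/6+1/3) = -(Real.pi/2) by ring, Real.cos_neg, Real.cos_pi_div_two]
    ring
  have hB : Tendsto (fun x : ℝ => 2 * Real.cos (Real.pi*(x+1/3))) (𝓝[>] (-(5:ℝ)/6)) (𝓝[>] 0) := by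
    rw [tendsto_nhdsWithin_iff]
    refine ⟨hB0.mono_left nhdsWithin_le_nhds, ?_⟩
    filter_upwards [Ioo_mem_nhdsGT_of_mem
      (show (-(5:ℝ)/6) ∈ Set.Ico (-(5:ℝ)/6) (1/6) by norm_num)] with x hx
    exact mul_pos two_pos (cos_pos_aux hx)
  have hC := Real.tendsto_log_nhdsGT_zero.comp hB
  exact hA.add_atBot hC

lemma case_gt (c : ℝ) (h : -(2:ℝ)/3 < xst c) :
    (∃! x : ℝ, x ∈ Set.Ioo (-(5:ℝ)/6) (1/6) ∧ x ≠ -(2:ℝ)/3 ∧ Fc c x = 0) ∧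
    (∀ x ∈ Set.Ioo (-(5:ℝ)/6) (1/6), x ≠ -(2:ℝ)/3 → Fc c x = 0 →
      x ∈ Set.Ioo (-(2:ℝ)/3) (1/6)) := by
  have hm := xst_mem c
  have hmono := Fc_mono c
  have hanti := Fc_anti c
  have h0 := Fc_neg23 c
  have hmem23 : -(2:ℝ)/3 ∈ Set.Ioc (-(5:ℝ)/6) (xst c) := ⟨by norm_num, le_of_lt h⟩
  have hmemstar : xst c ∈ Set.Ioc (-(5:ℝ)/6) (xst c) := ⟨hm.1, le_refl _⟩
  have hFstar : 0 < Fc c (xst c) := by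
    have := hmono hmem23 hmemstar h
    rwa [h0] at this
  have hev : ∀ᶠ x in 𝓝[<] (1/6:ℝ), Fc c x < 0 ∧ x ∈ Set.Ioo (xst c) (1/6) :=
    ((tendsto_right c).eventually_lt_atBot 0).and
      (eventually_of_mem (Ioo_mem_nhdsLT_of_mem
        (show (1/6:ℝ) ∈ Set.Ioc (xst c) (1/6) by exact ⟨hm.2, le_refl _⟩)) (fun x hx => hx))
  obtain ⟨x2, hx2neg, hx2mem⟩ := hev.exists
  have hIcc : Set.Icc (xst c) x2 ⊆ Set.Ioo (-(5:ℝ)/6) (1/6) :=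
    fun y hy => ⟨lt_of_lt_of_le hm.1 hy.1, lt_of_le_of_lt hy.2 hx2mem.2⟩
  obtain ⟨xb, hxbmem, hxb0⟩ := intermediate_value_Icc' (le_of_lt hx2mem.1) (contOn c hIcc)
    (Set.mem_Icc.mpr ⟨le_of_lt hx2neg, le_of_lt hFstar⟩)
  have hxbgt : xst c < xb := by
    rcases eq_or_lt_of_le hxbmem.1 with he | h'
    · exfalso; rw [← he] at hxb0; exact (ne_of_gt hFstar) hxb0
    · exact h'
  have hxbIoo : xb ∈ Set.Ioo (-(5:ℝ)/6) (1/6) := hIcc hxbmem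
  have classify : ∀ y ∈ Set.Ioo (-(5:ℝ)/6) (1/6), y ≠ -(2:ℝ)/3 → Fc c y = 0 →
      y = xb ∧ -(2:ℝ)/3 < y := by
    intro y hy hyne hy0
    rcases lt_trichotomy y (xst c) with h1 | h1 | h1
    · exfalso
      rcases lt_or_gt_of_ne hyne with h2 | h2
      · have := hmono ⟨hy.1, le_of_lt h1⟩ hmem23 h2
        rw [h0, hy0] at this; exact lt_irrefl 0 this
      · have := hmono hmem23 ⟨hy.1, le_of_lt h1⟩ h2
        rw [h0, hy0] at this; exact lt_irrefl 0 this
    · exfalso; rw [h1] at hy0; exact (ne_of_gt hFstar) hy0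
    · have heq : y = xb := hanti.injOn ⟨le_of_lt h1, hy.2⟩ ⟨le_of_lt hxbgt, hxbIoo.2⟩
        (by rw [hy0, hxb0])
      exact ⟨heq, lt_trans h h1⟩
  constructor
  · refine ⟨xb, ⟨hxbIoo, ne_of_gt (lt_trans h hxbgt), hxb0⟩, ?_⟩
    intro y hy
    exact (classify y hy.1 hy.2.1 hy.2.2).1
  · intro x hx hne hfx
    exact ⟨(classify x hx hne hfx).2, hx.2⟩

lemma case_lt (c : ℝ) (h : xst c < -(2:ℝ)/3) :
    (∃! x : ℝ, x ∈ Set.Ioo (-(5:ℝ)/6) (1/6) ∧ x ≠ -(2:ℝ)/3 ∧ Fc c x = 0) ∧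
    (∀ x ∈ Set.Ioo (-(5:ℝ)/6) (1/6), x ≠ -(2:ℝ)/3 → Fc c x = 0 →
      x ∈ Set.Ioo (-(5:ℝ)/6) (-(2:ℝ)/3)) := by
  have hm := xst_mem c
  have hmono := Fc_mono c
  have hanti := Fc_anti c
  have h0 := Fc_neg23 c
  have hmem23 : -(2:ℝ)/3 ∈ Set.Ico (xst c) (1/6) := ⟨le_of_lt h, by norm_num⟩
  have hmemstar : xst c ∈ Set.Ico (xst c) (1/6) := ⟨le_refl _, hm.2⟩
  have hFstar : 0 < Fc c (xst c) := by
    have := hanti hmemstar hmem23 h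
    rwa [h0] at this
  have hev : ∀ᶠ x in 𝓝[>] (-(5:ℝ)/6), Fc c x < 0 ∧ x ∈ Set.Ioo (-(5:ℝ)/6) (xst c) :=
    ((tendsto_left c).eventually_lt_atBot 0).and
      (eventually_of_mem (Ioo_mem_nhdsGT_of_mem
        (show (-(5:ℝ)/6) ∈ Set.Ico (-(5:ℝ)/6) (xst c) by exact ⟨le_refl _, hm.1⟩)) (fun x hx => hx))
  obtain ⟨x2, hx2neg, hx2mem⟩ := hev.exists
  have hIcc : Set.Icc x2 (xst c) ⊆ Set.Ioo (-(5:ℝ)/6) (1/6) :=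
    fun y hy => ⟨lt_of_lt_of_le hx2mem.1 hy.1, lt_of_le_of_lt hy.2 hm.2⟩
  obtain ⟨xb, hxbmem, hxb0⟩ := intermediate_value_Icc (le_of_lt hx2mem.2) (contOn c hIcc)
    (Set.mem_Icc.mpr ⟨le_of_lt hx2neg, le_of_lt hFstar⟩)
  have hxblt : xb < xst c := by
    rcases eq_or_lt_of_le hxbmem.2 with he | h'
    · exfalso; rw [he] at hxb0; exact (ne_of_gt hFstar) hxb0
    · exact h'
  have hxbIoo : xb ∈ Set.Ioo (-(5:ℝ)/6) (1/6) := hIcc hxbmem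
  have classify : ∀ y ∈ Set.Ioo (-(5:ℝ)/6) (1/6), y ≠ -(2:ℝ)/3 → Fc c y = 0 →
      y = xb ∧ y < -(2:ℝ)/3 := by
    intro y hy hyne hy0
    rcases lt_trichotomy y (xst c) with h1 | h1 | h1
    · have heq : y = xb := hmono.injOn ⟨hy.1, le_of_lt h1⟩ ⟨hxbIoo.1, le_of_lt hxblt⟩
        (by rw [hy0, hxb0])
      exact ⟨heq, lt_trans h1 h⟩
    · exfalso; rw [h1] at hy0; exact (ne_of_gt hFstar) hy0
    · exfalso
      rcases lt_or_gt_of_ne hyne with h2 | h2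
      · have := hanti ⟨le_of_lt h1, hy.2⟩ hmem23 h2
        rw [h0, hy0] at this; exact lt_irrefl 0 this
      · have := hanti hmem23 ⟨le_of_lt h1, hy.2⟩ h2
        rw [h0, hy0] at this; exact lt_irrefl 0 this
  constructor
  · refine ⟨xb, ⟨hxbIoo, ne_of_lt (lt_trans hxblt h), hxb0⟩, ?_⟩
    intro y hy
    exact (classify y hy.1 hy.2.1 hy.2.2).1
  · intro x hx hne hfx
    exact ⟨hx.1, (classify x hx hne hfx).2⟩

lemma case_eq (c : ℝ) (h : xst c = -(2:ℝ)/3) :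
    ∀ x ∈ Set.Ioo (-(5:ℝ)/6) (1/6), Fc c x = 0 → x = -(2:ℝ)/3 := by
  intro x hx hx0
  by_contra hne
  have hm := xst_mem c
  have hmono := Fc_mono c
  have hanti := Fc_anti c
  have h0 : Fc c (xst c) = 0 := by rw [h]; exact Fc_neg23 c
  rcases lt_or_gt_of_ne hne with h1 | h1
  · have h1' : x < xst c := by rw [h]; exact h1
    have := hmono ⟨hx.1, le_of_lt h1'⟩ ⟨hm.1, le_refl _⟩ h1'
    rw [h0, hx0] at this; exact lt_irrefl 0 this
  · have h1' : xst c < x := by rw [h]; exact h1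
    have := hanti ⟨le_refl _, hm.2⟩ ⟨le_of_lt h1', hx.2⟩ h1'
    rw [h0, hx0] at this; exact lt_irrefl 0 this

lemma arctan_neg_sqrt3 : Real.arctan (-(Real.sqrt 3)) = -(Real.pi/3) := by
  have hπ := Real.pi_pos
  rw [show -(Real.sqrt 3) = Real.tan (-(Real.pi/3)) by rw [Real.tan_neg, Real.tan_pi_div_three],
    Real.arctan_tan (by linarith) (by linarith)]

lemma xst_strictMono : StrictMono xst := by
  intro a b hab
  have hπ := Real.pi_pos
  have h1 : 3*a/Real.pi < 3*b/Real.pi := by gcongr ?_ / _; linarith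
  have h2 := Real.arctan_strictMono h1
  unfold xst
  have h3 : Real.arctan (3*a/Real.pi) / Real.pi < Real.arctan (3*b/Real.pi) / Real.pi := by
    gcongr ?_ / _
  linarith

lemma xst_val : xst (-(Real.pi / Real.sqrt 3)) = -(2:ℝ)/3 := by
  have hπ := Real.pi_pos
  have hs : (0:ℝ) < Real.sqrt 3 := Real.sqrt_pos.mpr (by norm_num)
  have hsq : Real.sqrt 3 * Real.sqrt 3 = 3 := Real.mul_self_sqrt (by norm_num)
  have h1 : 3 * (-(Real.pi / Real.sqrt 3)) / Real.pi = -(Real.sqrt 3) := by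
    field_simp
    linear_combination hsq
  unfold xst
  rw [h1, arctan_neg_sqrt3]
  field_simp
  ring

theorem stmt0 (r : ℝ) (hr : 0 < r) :
    (r ≠ Real.exp (-(Real.pi / Real.sqrt 3)) →
      ∃! x : ℝ, x ∈ Set.Ioo (-(5:ℝ)/6) (1/6) ∧ x ≠ -(2:ℝ)/3 ∧
        (2 + 3*x) * Real.log r + Real.log (2 * Real.cos (Real.pi * (x + 1/3))) = 0) ∧
    (∀ x ∈ Set.Ioo (-(5:ℝ)/6) (1/6), x ≠ -(2:ℝ)/3 →
      (2 + 3*x) * Real.log r + Real.log (2 * Real.cos (Real.pi * (x + 1/3))) = 0 →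
      (r < Real.exp (-(Real.pi / Real.sqrt 3)) → x ∈ Set.Ioo (-(5:ℝ)/6) (-(2:ℝ)/3)) ∧
      (Real.exp (-(Real.pi / Real.sqrt 3)) < r → x ∈ Set.Ioo (-(2:ℝ)/3) (1/6))) ∧
    (r = Real.exp (-(Real.pi / Real.sqrt 3)) →
      ∀ x ∈ Set.Ioo (-(5:ℝ)/6) (1/6),
        (2 + 3*x) * Real.log r + Real.log (2 * Real.cos (Real.pi * (x + 1/3))) = 0 →
        x = -(2:ℝ)/3) := by
  set c := Real.log r with hc
  rcases lt_trichotomy r (Real.exp (-(Real.pi / Real.sqrt 3))) with hlt | heq | hgt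
  · have hclt : c < -(Real.pi / Real.sqrt 3) := (Real.log_lt_iff_lt_exp hr).mpr hlt
    have hx : xst c < -(2:ℝ)/3 := by
      have := xst_strictMono hclt
      rwa [xst_val] at this
    obtain ⟨h1, h2⟩ := case_lt c hx
    refine ⟨fun _ => h1, fun x hxm hne h0 => ?_, fun hre => absurd hre (ne_of_lt hlt)⟩
    exact ⟨fun _ => h2 x hxm hne h0, fun hgt' => (lt_asymm hlt hgt').elim⟩
  · refine ⟨fun hne => absurd heq hne, fun x hxm hne h0 => ?_, fun _ => ?_⟩
    · exact ⟨fun hlt' => absurd (heq ▸ hlt') (lt_irrefl _),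
        fun hgt' => absurd (heq ▸ hgt') (lt_irrefl _)⟩
    · have hceq : c = -(Real.pi / Real.sqrt 3) := by rw [hc, heq, Real.log_exp]
      have hx : xst c = -(2:ℝ)/3 := by rw [hceq, xst_val]
      exact fun x hxm h0 => case_eq c hx x hxm h0
  · have hcgt : -(Real.pi / Real.sqrt 3) < c := (Real.lt_log_iff_exp_lt hr).mpr hgt
    have hx : -(2:ℝ)/3 < xst c := by
      have := xst_strictMono hcgt
      rwa [xst_val] at this
    obtain ⟨h1, h2⟩ := case_gt c hx
    refine ⟨fun _ => h1, fun x hxm hne h0 => ?_, fun hre => absurd hre (ne_of_gt hgt)⟩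
    exact ⟨fun hlt' => (lt_asymm hlt' hgt).elim, fun _ => h2 x hxm hne h0⟩
end

section
/- For every ζ ∈ (0, 1/6), one has (4π/3)·sin(πζ) + 2·cos(π(ζ+1/3))·( log(2·cos(π(ζ+1/3)))/(3ζ) + √3·π/3 ) > 0. -/
open Real

theorem stmt4 : ∀ ζ ∈ Set.Ioo (0:ℝ) (1/6),
    0 < (4*Real.pi/3) * Real.sin (Real.pi*ζ) +
      2 * Real.cos (Real.pi*(ζ+1/3)) *
        (Real.log (2*Real.cos (Real.pi*(ζ+1/3))) / (3*ζ) + Real.sqrt 3 * Real.pi / 3) := by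
  rintro ζ ⟨hζ0, hζ6⟩
  have hπ := Real.pi_pos
  set t := Real.pi * ζ with ht
  have ht0 : 0 < t := by positivity
  have ht6 : t < π/6 := by nlinarith
  have hrw : Real.pi*(ζ+1/3) = t + π/3 := by rw [ht]; ring
  rw [hrw]
  have hangle : t + π/3 < π/2 := by linarith
  have hc : 0 < Real.cos (t + π/3) :=
    Real.cos_pos_of_mem_Ioo ⟨by linarith, hangle⟩
  set c := Real.cos (t + π/3) with hcdef
  have hclt : c < 1/2 := by
    have h := Real.cos_lt_cos_of_nonneg_of_le_pi (x := π/3) (y := t + π/3)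
      (by positivity) (by linarith) (by linarith)
    rwa [Real.cos_pi_div_three] at h
  have hx0 : 0 < 2*c := by linarith
  have hx1 : 2*c < 1 := by linarith
  -- x log x > x - 1 on (0,1)
  have hlog : 2*c - 1 < (2*c) * Real.log (2*c) := by
    have hne : (2*c)⁻¹ ≠ 1 := by
      intro h
      have : 2*c = 1 := by
        field_simp at h; linarith
      linarith
    have h := Real.log_lt_sub_one_of_pos (x := (2*c)⁻¹) (by positivity) hne
    rw [Real.log_inv] at h
    have h2 : (2*c) * ((2*c)⁻¹ - 1) = 1 - 2*c := by field_simp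
    nlinarith [mul_lt_mul_of_pos_left h hx0]
  set s := Real.sin (t/2) with hsdef
  set c2 := Real.cos (t/2) with hc2def
  set S := Real.sin (t/2 + π/3) with hSdef
  have h3 : Real.sqrt 3 * Real.sqrt 3 = 3 := Real.mul_self_sqrt (by norm_num)
  have hsin3 : Real.sin (π/3) = Real.sqrt 3 / 2 := Real.sin_pi_div_three
  have hcos3 : Real.cos (π/3) = 1/2 := Real.cos_pi_div_three
  have hcost : Real.cos t = 1 - 2*s^2 := by
    rw [show t = 2*(t/2) by ring, Real.cos_two_mul]
    have := Real.sin_sq_add_cos_sq (t/2)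
    rw [hsdef]; linarith
  have hsint : Real.sin t = 2*s*c2 := by
    rw [show t = 2*(t/2) by ring, Real.sin_two_mul]
  have hcexp : c = Real.cos t * (1/2) - Real.sin t * (Real.sqrt 3/2) := by
    rw [hcdef, Real.cos_add, hcos3, hsin3]
  have hSexp : S = s * (1/2) + c2 * (Real.sqrt 3/2) := by
    rw [hSdef, Real.sin_add, hcos3, hsin3]
  -- identity 1 : 2c - 1 = -4 s S
  have hid1 : 2*c - 1 = -4 * s * S := by
    rw [hcexp, hSexp, hcost, hsint]; ring
  -- identity 2 : 2 sin t + √3 c = sin (t + π/3)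
  have hid2 : Real.sin (t + π/3) = 2 * Real.sin t + Real.sqrt 3 * c := by
    rw [Real.sin_add, hcos3, hsin3, hcexp]
    linear_combination (Real.sin t / 2) * h3
  have hsle : s < t/2 := Real.sin_lt (by linarith)
  have hS0 : 0 < S := Real.sin_pos_of_pos_of_lt_pi (by positivity) (by linarith)
  have hmono : S ≤ Real.sin (t + π/3) := by
    apply Real.sin_le_sin_of_le_of_le_pi_div_two (by linarith) (by linarith) (by linarith)
  -- chain
  have h3ζ : (0:ℝ) < 3*ζ := by linarith
  have hdiv : (2*c - 1)/(3*ζ) < (2*c * Real.log (2*c))/(3*ζ) :=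
    (div_lt_div_iff_of_pos_right h3ζ).mpr hlog
  have hstep : -(2*π/3) * S ≤ (2*c - 1)/(3*ζ) := by
    rw [hid1, le_div_iff₀ h3ζ]
    nlinarith [mul_lt_mul_of_pos_right hsle hS0, ht]
  have hfinal : 0 ≤ (4*π/3) * Real.sin t + (2*c - 1)/(3*ζ) + 2*c*(Real.sqrt 3 * π/3) := by
    have h1 : (2*π/3) * S ≤ (2*π/3) * (2 * Real.sin t + Real.sqrt 3 * c) := by
      rw [← hid2]
      exact mul_le_mul_of_nonneg_left hmono (by positivity)
    have h2 : (2*π/3) * (2 * Real.sin t + Real.sqrt 3 * c)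
        = (4*π/3) * Real.sin t + 2*c*(Real.sqrt 3 * π/3) := by ring
    linarith
  have heq : 2*c*(Real.log (2*c)/(3*ζ) + Real.sqrt 3 * π/3)
      = (2*c * Real.log (2*c))/(3*ζ) + 2*c*(Real.sqrt 3 * π/3) := by ring
  calc (0:ℝ) ≤ (4*π/3) * Real.sin t + (2*c - 1)/(3*ζ) + 2*c*(Real.sqrt 3 * π/3) := hfinal
    _ < (4*π/3) * Real.sin t + (2*c * Real.log (2*c))/(3*ζ) + 2*c*(Real.sqrt 3 * π/3) := by
        linarith
    _ = (4*π/3) * Real.sin t + 2*c*(Real.log (2*c)/(3*ζ) + Real.sqrt 3 * π/3) := by ring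
end

section
/- Define Λ(ζ) = 3·∫_{-∞}^{ζ} exp(s³ − ζ³) ds for ζ ∈ ℝ. Then the integral converges for every ζ, Λ(ζ) > 0 for all ζ, and Λ is differentiable with Λ'(ζ) + 3ζ²·Λ(ζ) = 3 for all ζ ∈ ℝ. -/
open MeasureTheory Set Real

lemma cube_int : ∀ ζ : ℝ, IntegrableOn (fun s : ℝ => Real.exp (s^3)) (Set.Iic ζ) := by
  intro ζ
  have h1 : IntegrableOn (fun s : ℝ => Real.exp (s^3)) (Set.Iic (-1)) := by
    refine Integrable.mono (integrableOn_exp_Iic (-1)) ?_ ?_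
    · exact (Real.continuous_exp.comp (continuous_pow 3)).aestronglyMeasurable
    · filter_upwards [ae_restrict_mem measurableSet_Iic] with s hs
      simp only [Real.norm_eq_abs, abs_of_pos (Real.exp_pos _)]
      apply Real.exp_le_exp.2
      have hs' : s ≤ -1 := hs
      nlinarith [mul_nonneg (mul_nonneg (by linarith : (0:ℝ) ≤ -s) (by linarith : (0:ℝ) ≤ 1 - s)) (by linarith : (0:ℝ) ≤ -(1+s))]
  have h2 : IntegrableOn (fun s : ℝ => Real.exp (s^3)) (Set.Icc (-1) ζ) :=
    (Real.continuous_exp.comp (continuous_pow 3)).continuousOn.integrableOn_compact isCompact_Icc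
  have := h1.union h2
  refine this.mono_set ?_
  intro x hx
  rcases le_or_gt x (-1) with h | h
  · exact Or.inl h
  · exact Or.inr ⟨h.le, hx⟩

lemma int_shift (ζ : ℝ) : IntegrableOn (fun s : ℝ => Real.exp (s^3 - ζ^3)) (Set.Iic ζ) := by
  have : (fun s : ℝ => Real.exp (s^3 - ζ^3)) = fun s => Real.exp (s^3) * Real.exp (-ζ^3) := by
    funext s; rw [← Real.exp_add]; ring_nf
  rw [this]
  exact (cube_int ζ).mul_const _

theorem stmt5 (Λ : ℝ → ℝ)
    (hΛ : ∀ ζ : ℝ, Λ ζ = 3 * ∫ s in Set.Iic ζ, Real.exp (s^3 - ζ^3)) :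
    (∀ ζ : ℝ, MeasureTheory.IntegrableOn (fun s : ℝ => Real.exp (s^3 - ζ^3)) (Set.Iic ζ)) ∧
    (∀ ζ : ℝ, 0 < Λ ζ) ∧
    (∀ ζ : ℝ, HasDerivAt Λ (3 - 3*ζ^2 * Λ ζ) ζ) := by
  set f : ℝ → ℝ := fun s => Real.exp (s^3) with hf
  set F : ℝ → ℝ := fun ζ => ∫ s in Set.Iic ζ, f s with hF
  have hfc : Continuous f := Real.continuous_exp.comp (continuous_pow 3)
  have hΛF : ∀ ζ : ℝ, Λ ζ = 3 * (Real.exp (-ζ^3) * F ζ) := by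
    intro ζ
    rw [hΛ ζ, hF]
    congr 1
    rw [← integral_const_mul]
    congr 1; funext s
    rw [← Real.exp_add]; ring_nf
  have hFpos : ∀ ζ : ℝ, 0 < F ζ := by
    intro ζ
    rw [hF]
    rw [setIntegral_pos_iff_support_of_nonneg_ae]
    · have hsupp : Function.support f = Set.univ := by
        ext x
        simp [hf, Function.mem_support, (Real.exp_pos _).ne']
      rw [hsupp, Set.univ_inter, Real.volume_Iic]
      exact ENNReal.zero_lt_top
    · filter_upwards with s using (Real.exp_pos _).le
    · exact cube_int ζ
  have hFderiv : ∀ ζ : ℝ, HasDerivAt F (f ζ) ζ := by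
    intro ζ
    have key : ∀ u : ℝ, F u = F 0 + ∫ s in (0:ℝ)..u, f s := by
      intro u
      rw [hF]
      have := intervalIntegral.integral_Iic_sub_Iic (cube_int 0) (cube_int u)
      linarith [this]
    have : HasDerivAt (fun u => F 0 + ∫ s in (0:ℝ)..u, f s) (f ζ) ζ := by
      refine HasDerivAt.const_add _ ?_
      exact intervalIntegral.integral_hasDerivAt_right
        (hfc.intervalIntegrable 0 ζ) (hfc.stronglyMeasurableAtFilter _ _) hfc.continuousAt
    exact this.congr_of_eventuallyEq (Filter.Eventually.of_forall key) |>.congr_deriv rfl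
  refine ⟨int_shift, ?_, ?_⟩
  · intro ζ
    rw [hΛF ζ]
    exact mul_pos (by norm_num) (mul_pos (Real.exp_pos _) (hFpos ζ))
  · intro ζ
    have hexp : HasDerivAt (fun u : ℝ => Real.exp (-u^3)) (Real.exp (-ζ^3) * (-(3*ζ^2))) ζ := by
      have h1 : HasDerivAt (fun u : ℝ => -u^3) (-(3*ζ^2)) ζ := by
        simpa using ((hasDerivAt_pow 3 ζ).fun_neg)
      exact (Real.hasDerivAt_exp _).comp ζ h1
    have hprod : HasDerivAt (fun u => 3 * (Real.exp (-u^3) * F u))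
        (3 * (Real.exp (-ζ^3) * (-(3*ζ^2)) * F ζ + Real.exp (-ζ^3) * f ζ)) ζ :=
      ((hexp.mul (hFderiv ζ))).const_mul 3
    have heq : (fun u => 3 * (Real.exp (-u^3) * F u)) = Λ := by
      funext u; rw [hΛF u]
    rw [heq] at hprod
    convert hprod using 1
    rw [hΛF ζ]
    have : Real.exp (-ζ^3) * f ζ = 1 := by
      rw [hf]; rw [← Real.exp_add]; ring_nf; exact Real.exp_zero
    rw [this]; ring
end

section
/- Let Λ(ζ) = 3·∫_{-∞}^{ζ} exp(s³ − ζ³) ds. Then the symmetric improper integral lim_{M→∞} ∫_{-M}^{M} ζ·Λ(ζ) dζ exists and equals π/√3. -/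
open MeasureTheory Real Set Filter

noncomputable def phi6 (u ζ : ℝ) : ℝ := ζ * Real.exp (-3*u*ζ^2 + 3*u^2*ζ - u^3)

lemma expo_le6 (u ζ : ℝ) (hu : 0 ≤ u) : -3*u*ζ^2 + 3*u^2*ζ - u^3 ≤ 1/4 - u/4 := by
  nlinarith [mul_nonneg hu (sq_nonneg (2*ζ - u)), mul_nonneg hu (sq_nonneg (u-1)),
    sq_nonneg (2*u-1)]

lemma contPhi6 : Continuous (fun p : ℝ × ℝ => phi6 p.1 p.2) := by
  unfold phi6; fun_prop

lemma intOn_exp6 (ζ : ℝ) :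
    IntegrableOn (fun u => Real.exp (-3*u*ζ^2 + 3*u^2*ζ - u^3)) (Ioi (0:ℝ)) := by
  have hb : IntegrableOn (fun u : ℝ => Real.exp (1/4) * Real.exp (-(1/4)*u)) (Ioi 0) :=
    (exp_neg_integrableOn_Ioi 0 (by norm_num)).const_mul _
  refine hb.mono' (Continuous.aestronglyMeasurable (by fun_prop)) ?_
  filter_upwards [ae_restrict_mem measurableSet_Ioi] with u hu
  rw [Real.norm_eq_abs, abs_of_pos (exp_pos _), ← Real.exp_add]
  exact Real.exp_le_exp.2 (by nlinarith [expo_le6 u ζ (le_of_lt hu)])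

lemma lam_formula6 (Λ : ℝ → ℝ)
    (hΛ : ∀ ζ : ℝ, Λ ζ = 3 * ∫ s in Set.Iic ζ, Real.exp (s^3 - ζ^3)) (ζ : ℝ) :
    Λ ζ = 3 * ∫ u in Ioi (0:ℝ), Real.exp (-3*u*ζ^2 + 3*u^2*ζ - u^3) := by
  rw [hΛ]
  congr 1
  have A : MeasurableEmbedding (fun x : ℝ => x + ζ) :=
    (Homeomorph.addRight ζ).isClosedEmbedding.measurableEmbedding
  have h1 : (∫ s in Iic ζ, Real.exp (s^3 - ζ^3))
      = ∫ x in Iic (0:ℝ), Real.exp ((x+ζ)^3 - ζ^3) := by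
    have h := A.setIntegral_map (μ := volume) (fun s => Real.exp (s^3 - ζ^3)) (Iic ζ)
    rw [MeasureTheory.map_add_right_eq_self] at h
    rw [h]
    congr 1
    ext x; simp
  have h2 : (∫ x in Ioi (0:ℝ), Real.exp ((-x+ζ)^3 - ζ^3))
      = ∫ x in Iic (0:ℝ), Real.exp ((x+ζ)^3 - ζ^3) := by
    have := integral_comp_neg_Ioi (0:ℝ) (fun x => Real.exp ((x+ζ)^3 - ζ^3))
    simpa using this
  rw [h1, ← h2]
  refine setIntegral_congr_fun measurableSet_Ioi (fun u _ => ?_)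
  exact congrArg Real.exp (by ring)

lemma psi_integrable6 {u : ℝ} (hu : 0 < u) :
    Integrable (fun x : ℝ => (x + u/2) * Real.exp (-(3*u) * x^2) * Real.exp (-u^3/4)) := by
  have hb : (0:ℝ) < 3*u := by linarith
  have h1 := integrable_mul_exp_neg_mul_sq hb
  have h2 := integrable_exp_neg_mul_sq hb
  have h3 := ((h1.add (h2.const_mul (u/2))).mul_const (Real.exp (-u^3/4)))
  refine h3.congr (Filter.Eventually.of_forall (fun x => ?_))
  simp only [Pi.add_apply]
  ring

lemma phi_eq_psi6 {u : ℝ} (ζ : ℝ) :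
    phi6 u ζ = (fun x : ℝ => (x + u/2) * Real.exp (-(3*u) * x^2) * Real.exp (-u^3/4)) (ζ - u/2) := by
  show phi6 u ζ = (ζ - u/2 + u/2) * Real.exp (-(3*u) * (ζ - u/2)^2) * Real.exp (-u^3/4)
  rw [sub_add_cancel, mul_assoc, ← Real.exp_add]
  unfold phi6
  exact congrArg (fun t => ζ * Real.exp t) (by ring)

lemma phi_integrable6 {u : ℝ} (hu : 0 < u) : Integrable (fun ζ => phi6 u ζ) := by
  refine ((psi_integrable6 hu).comp_sub_right (u/2)).congr
    (Filter.Eventually.of_forall (fun ζ => (phi_eq_psi6 ζ).symm))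

lemma integral_phi6 {u : ℝ} (hu : 0 < u) :
    ∫ ζ : ℝ, phi6 u ζ = Real.sqrt (π/(3*u)) * (u/2) * Real.exp (-u^3/4) := by
  have hb : (0:ℝ) < 3*u := by linarith
  have h1 := integrable_mul_exp_neg_mul_sq hb
  have h2 := integrable_exp_neg_mul_sq hb
  have step1 : ∫ ζ : ℝ, phi6 u ζ
      = ∫ x : ℝ, (x + u/2) * Real.exp (-(3*u) * x^2) * Real.exp (-u^3/4) := by
    simp_rw [phi_eq_psi6]
    exact integral_sub_right_eq_self (μ := volume)
      (fun x : ℝ => (x + u/2) * Real.exp (-(3*u) * x^2) * Real.exp (-u^3/4)) (u/2)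
  have hodd : ∫ x : ℝ, x * Real.exp (-(3*u) * x^2) = 0 := by
    have h := integral_neg_eq_self (fun x : ℝ => x * Real.exp (-(3*u) * x^2)) volume
    simp only [neg_sq, neg_mul, integral_neg] at h
    simp only [neg_mul]
    linarith
  rw [step1, integral_mul_const]
  have : (fun x : ℝ => (x + u/2) * Real.exp (-(3*u) * x^2))
      = fun x => x * Real.exp (-(3*u) * x^2) + (u/2) * Real.exp (-(3*u) * x^2) := by
    funext x; ring
  rw [this, integral_add h1 (h2.const_mul _), hodd, integral_const_mul, integral_gaussian]
  ring

noncomputable def F6 (u ζ : ℝ) : ℝ := phi6 u ζ + phi6 u (-ζ)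

lemma F6_cont : Continuous (Function.uncurry F6) := by
  unfold Function.uncurry F6 phi6; fun_prop

lemma F6_nonneg {u ζ : ℝ} (hu : 0 ≤ u) (hζ : 0 ≤ ζ) : 0 ≤ F6 u ζ := by
  have h : Real.exp (-3*u*(-ζ)^2 + 3*u^2*(-ζ) - u^3)
      ≤ Real.exp (-3*u*ζ^2 + 3*u^2*ζ - u^3) :=
    Real.exp_le_exp.2 (by nlinarith)
  unfold F6 phi6
  nlinarith [mul_nonneg hζ (sub_nonneg.2 h)]

lemma F6_int_zeta {u : ℝ} (hu : 0 < u) : Integrable (fun ζ => F6 u ζ) := by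
  exact (phi_integrable6 hu).add (phi_integrable6 hu).comp_neg

lemma F6_setIntegral {u : ℝ} (hu : 0 < u) :
    ∫ ζ in Ioi (0:ℝ), F6 u ζ = √(π/(3*u)) * (u/2) * Real.exp (-u^3/4) := by
  unfold F6
  rw [integral_add ((phi_integrable6 hu).integrableOn)
    ((phi_integrable6 hu).comp_neg.integrableOn)]
  have h2 : ∫ ζ in Ioi (0:ℝ), phi6 u (-ζ) = ∫ ζ in Iic (0:ℝ), phi6 u ζ := by
    simpa using integral_comp_neg_Ioi (0:ℝ) (phi6 u)
  rw [h2, add_comm, intervalIntegral.integral_Iic_add_Ioi (phi_integrable6 hu).integrableOn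
    (phi_integrable6 hu).integrableOn]
  exact integral_phi6 hu

lemma nice_eq6 {u : ℝ} (hu : 0 < u) :
    √(π/(3*u)) * (u/2) * Real.exp (-u^3/4)
      = (√(π/3)/2) * (u ^ ((1:ℝ)/2) * Real.exp (-(1/4) * u ^ (3:ℝ))) := by
  have h1 : √(π/(3*u)) = √(π/3) / √u := by
    rw [show π/(3*u) = (π/3)/u by ring, Real.sqrt_div (by positivity)]
  have h2 : u ^ ((1:ℝ)/2) = √u := (Real.sqrt_eq_rpow u).symm
  have h3 : u ^ ((3:ℝ)) = u^3 := by
    rw [show ((3:ℝ)) = ((3:ℕ):ℝ) by norm_num, Real.rpow_natCast]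
  rw [h1, h2, h3, show -u^3/4 = -(1/4)*u^3 by ring,
    show √(π/3)/√u*(u/2)*Real.exp (-(1/4)*u^3)
      = (√(π/3)/2)*(u/√u*Real.exp (-(1/4)*u^3)) by ring, Real.div_sqrt]

lemma nice_int6 : IntegrableOn
    (fun u : ℝ => √(π/(3*u)) * (u/2) * Real.exp (-u^3/4)) (Ioi 0) := by
  have h := (integrableOn_rpow_mul_exp_neg_mul_rpow
    (by norm_num : (-1:ℝ) < 1/2) (by norm_num : (0:ℝ) < 3)
    (by norm_num : (0:ℝ) < 1/4)).const_mul (√(π/3)/2)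
  have h' : IntegrableOn
      (fun u : ℝ => (√(π/3)/2) * (u ^ ((1:ℝ)/2) * Real.exp (-(1/4) * u ^ (3:ℝ)))) (Ioi 0) := h
  exact h'.congr_fun (fun u hu => (nice_eq6 hu).symm) measurableSet_Ioi

lemma quarter_rpow6 : ((1/4:ℝ)) ^ (-(1/2):ℝ) = 2 := by
  rw [Real.rpow_neg (by norm_num), ← Real.sqrt_eq_rpow,
    show (1/4:ℝ) = (1/2)^2 by norm_num, Real.sqrt_sq (by norm_num)]
  norm_num

lemma nice_integral6 :
    ∫ u in Ioi (0:ℝ), √(π/(3*u)) * (u/2) * Real.exp (-u^3/4) = √(π/3) * √π / 3 := by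
  rw [setIntegral_congr_fun measurableSet_Ioi (fun u (hu : u ∈ Ioi 0) => nice_eq6 hu)]
  rw [integral_const_mul, integral_rpow_mul_exp_neg_mul_rpow
    (by norm_num : (0:ℝ) < 3) (by norm_num : (-1:ℝ) < 1/2) (by norm_num : (0:ℝ) < 1/4)]
  rw [show (-(1/2+1)/3 : ℝ) = -(1/2) by norm_num, show ((1/2+1)/3 : ℝ) = 1/2 by norm_num,
    quarter_rpow6, Real.Gamma_one_half_eq]
  ring

lemma prod_int6 : Integrable (Function.uncurry F6)
    ((volume.restrict (Ioi (0:ℝ))).prod (volume.restrict (Ioi (0:ℝ)))) := by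
  rw [integrable_prod_iff F6_cont.aestronglyMeasurable]
  constructor
  · filter_upwards [ae_restrict_mem measurableSet_Ioi] with u hu
    exact (F6_int_zeta hu).restrict
  · have key : ∀ u : ℝ, u ∈ Ioi (0:ℝ) →
        (∫ ζ, ‖Function.uncurry F6 (u, ζ)‖ ∂(volume.restrict (Ioi (0:ℝ))))
          = √(π/(3*u)) * (u/2) * Real.exp (-u^3/4) := by
      intro u hu
      have h1 : ∫ ζ, ‖Function.uncurry F6 (u, ζ)‖ ∂(volume.restrict (Ioi (0:ℝ)))
          = ∫ ζ in Ioi (0:ℝ), F6 u ζ := by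
        apply integral_congr_ae
        filter_upwards [ae_restrict_mem measurableSet_Ioi] with ζ hζ
        exact Real.norm_of_nonneg (F6_nonneg (le_of_lt hu) (le_of_lt hζ))
      rw [h1, F6_setIntegral hu]
    refine nice_int6.congr ?_
    filter_upwards [ae_restrict_mem measurableSet_Ioi] with u hu
    exact (key u hu).symm

lemma total6 : ∫ ζ in Ioi (0:ℝ), (∫ u in Ioi (0:ℝ), F6 u ζ) = √(π/3) * √π / 3 := by
  rw [← integral_integral_swap prod_int6]
  rw [integral_congr_ae (g := fun u => √(π/(3*u)) * (u/2) * Real.exp (-u^3/4)) ?_]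
  · exact nice_integral6
  · filter_upwards [ae_restrict_mem measurableSet_Ioi] with u hu
    exact F6_setIntegral hu

lemma cont_int6 : Continuous fun ζ : ℝ =>
    ∫ u in Ioi (0:ℝ), Real.exp (-3*u*ζ^2 + 3*u^2*ζ - u^3) := by
  rw [continuous_iff_continuousAt]
  intro ζ0
  apply continuousAt_of_dominated (bound := fun u => Real.exp (1/4) * Real.exp (-(1/4)*u))
  · exact Filter.Eventually.of_forall
      (fun ζ => Continuous.aestronglyMeasurable (by fun_prop))
  · refine Filter.Eventually.of_forall (fun ζ => ?_)
    filter_upwards [ae_restrict_mem measurableSet_Ioi] with u hu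
    rw [Real.norm_eq_abs, abs_of_pos (Real.exp_pos _), ← Real.exp_add]
    exact Real.exp_le_exp.2 (by nlinarith [expo_le6 u ζ (le_of_lt hu)])
  · exact (exp_neg_integrableOn_Ioi 0 (by norm_num)).const_mul _
  · exact Filter.Eventually.of_forall (fun u =>
      (Continuous.continuousAt (by fun_prop)))

lemma sqrt_val6 : √(π/3) * √π = π / √3 := by
  rw [← Real.sqrt_mul (by positivity) π, show π/3*π = π^2/3 by ring,
    Real.sqrt_div (sq_nonneg π), Real.sqrt_sq Real.pi_pos.le]

lemma intOn_phi6 (ζ : ℝ) : IntegrableOn (fun u => phi6 u ζ) (Ioi (0:ℝ)) := by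
  unfold phi6
  exact (intOn_exp6 ζ).const_mul ζ

theorem stmt6 (Λ : ℝ → ℝ)
    (hΛ : ∀ ζ : ℝ, Λ ζ = 3 * ∫ s in Set.Iic ζ, Real.exp (s^3 - ζ^3)) :
    Filter.Tendsto (fun M : ℝ => ∫ ζ in (-M)..M, ζ * Λ ζ) Filter.atTop
      (nhds (Real.pi / Real.sqrt 3)) := by
  have hΛcont : Continuous Λ := by
    have : Λ = fun ζ => 3 * ∫ u in Ioi (0:ℝ), Real.exp (-3*u*ζ^2 + 3*u^2*ζ - u^3) :=
      funext (lam_formula6 Λ hΛ)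
    rw [this]
    exact continuous_const.mul cont_int6
  have hg : Continuous fun ζ : ℝ => ζ * Λ ζ := continuous_id.mul hΛcont
  have hgneg : Continuous fun x : ℝ => -x * Λ (-x) :=
    continuous_neg.mul (hΛcont.comp continuous_neg)
  have hterm : ∀ ζ : ℝ, ζ * Λ ζ = 3 * ∫ u in Ioi (0:ℝ), phi6 u ζ := by
    intro ζ
    rw [lam_formula6 Λ hΛ ζ]
    unfold phi6
    rw [integral_const_mul]
    ring
  have hform : ∀ ζ : ℝ, ζ * Λ ζ + -ζ * Λ (-ζ) = 3 * ∫ u in Ioi (0:ℝ), F6 u ζ := by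
    intro ζ
    unfold F6
    rw [integral_add (intOn_phi6 ζ) (intOn_phi6 (-ζ)), mul_add, ← hterm ζ, ← hterm (-ζ)]
  set h : ℝ → ℝ := fun ζ => ζ * Λ ζ + -ζ * Λ (-ζ) with hh
  have hInt : IntegrableOn h (Ioi (0:ℝ)) := by
    refine ((prod_int6.integral_prod_right).const_mul 3).congr
      (Filter.Eventually.of_forall (fun ζ => ?_))
    simp only [Function.uncurry_apply_pair]
    exact (hform ζ).symm
  have hval : ∫ ζ in Ioi (0:ℝ), h ζ = π / √3 := by
    have e : ∫ ζ in Ioi (0:ℝ), h ζ = ∫ ζ in Ioi (0:ℝ), 3 * ∫ u in Ioi (0:ℝ), F6 u ζ :=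
      integral_congr_ae (Filter.Eventually.of_forall (fun ζ => hform ζ))
    rw [e, integral_const_mul, total6, ← sqrt_val6]
    ring
  have hTend := intervalIntegral_tendsto_integral_Ioi 0 hInt tendsto_id
  rw [hval] at hTend
  refine hTend.congr (fun M => ?_)
  have e1 : ∫ x in (0:ℝ)..M, -x * Λ (-x) = ∫ x in (-M)..(0:ℝ), x * Λ x := by
    simpa using intervalIntegral.integral_comp_neg (a := 0) (b := M) (fun ζ => ζ * Λ ζ)
  have e2 : ∫ x in (0:ℝ)..M, h x
      = (∫ x in (0:ℝ)..M, x * Λ x) + ∫ x in (0:ℝ)..M, -x * Λ (-x) := by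
    rw [← intervalIntegral.integral_add (hg.intervalIntegrable _ _)
      (hgneg.intervalIntegrable _ _)]
  show ∫ x in (0:ℝ)..(id M), h x = ∫ ζ in (-M)..M, ζ * Λ ζ
  simp only [id]
  rw [e2, e1, add_comm]
  exact intervalIntegral.integral_add_adjacent_intervals
    (hg.intervalIntegrable _ _) (hg.intervalIntegrable _ _)
end

section
/- Let λ : (0, ∞) → (0, ∞) be continuous and suppose liminf_{R→0⁺} log(λ(R))/log(R) = ζ with 0 < ζ < ∞. Then for every K > 1 there exist sequences R_n → 0⁺ and μ_n → ∞ such that for every n and every R with R_n/μ_n ≤ R ≤ μ_n·R_n, one has λ(R)/λ(R_n) ≤ K·(R/R_n)^ζ. -/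
open Filter Real Set

theorem stmt12 (l : ℝ → ℝ) (hcont : ContinuousOn l (Set.Ioi 0))
    (hpos : ∀ R ∈ Set.Ioi (0:ℝ), 0 < l R) (ζ : ℝ) (hζ : 0 < ζ)
    (hlim : Filter.liminf (fun R => Real.log (l R) / Real.log R)
      (nhdsWithin 0 (Set.Ioi 0)) = ζ)
    (K : ℝ) (hK : 1 < K) :
    ∃ R μ : ℕ → ℝ, (∀ n, 0 < R n) ∧
      Filter.Tendsto R Filter.atTop (nhds 0) ∧
      Filter.Tendsto μ Filter.atTop Filter.atTop ∧
      ∀ n : ℕ, ∀ ρ : ℝ, R n / μ n ≤ ρ → ρ ≤ μ n * R n →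
        l ρ / l (R n) ≤ K * (ρ / R n) ^ ζ := by
  set f : ℝ → ℝ := fun R => Real.log (l R) / Real.log R with hfdef
  set S : Set ℝ := {a : ℝ | ∀ᶠ R in nhdsWithin 0 (Set.Ioi 0), a ≤ f R} with hSdef
  have hsup : sSup S = ζ := by rw [← hlim, Filter.liminf_eq]
  have hSne : S.Nonempty ∧ BddAbove S := by
    by_contra hc
    rcases not_and_or.mp hc with hc | hc
    · rw [Set.not_nonempty_iff_eq_empty] at hc
      rw [hc, Real.sSup_empty] at hsup; linarith
    · rw [Real.sSup_of_not_bddAbove hc] at hsup; linarith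
  -- (a) eventual lower bound on f
  have ha : ∀ ε : ℝ, 0 < ε → ∃ u : ℝ, 0 < u ∧ ∀ R : ℝ, 0 < R → R < u → ζ - ε < f R := by
    intro ε hε
    obtain ⟨a, haS, hlt⟩ := exists_lt_of_lt_csSup hSne.1
      (show ζ - ε < sSup S by rw [hsup]; linarith)
    have hmem : {R : ℝ | a ≤ f R} ∈ nhdsWithin (0:ℝ) (Set.Ioi 0) := haS
    rw [mem_nhdsGT_iff_exists_Ioo_subset] at hmem
    obtain ⟨u, hu, hsub⟩ := hmem
    exact ⟨u, hu, fun R h1 h2 => lt_of_lt_of_le hlt (hsub ⟨h1, h2⟩)⟩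
  -- (b) frequent upper bound on f
  have hb : ∀ ε : ℝ, 0 < ε → ∀ C : ℝ, ∃ R : ℝ, 0 < R ∧ R < Real.exp (-C) ∧ f R < ζ + ε := by
    intro ε hε C
    by_contra hcon
    push_neg at hcon
    have hmem : {R : ℝ | ζ + ε ≤ f R} ∈ nhdsWithin (0:ℝ) (Set.Ioi 0) := by
      filter_upwards [Ioo_mem_nhdsGT_of_mem
        (Set.left_mem_Ico.mpr (Real.exp_pos (-C)))] with R hR
      exact hcon R hR.1 hR.2
    have hle : ζ + ε ≤ sSup S := le_csSup hSne.2 hmem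
    rw [hsup] at hle; linarith
  clear_value f S
  have hδ : 0 < Real.log K := Real.log_pos hK
  set H : ℝ → ℝ := fun s => Real.log (l (Real.exp (-s))) + ζ * s with hHdef
  have hHcont : Continuous H := by
    have h1 : Continuous fun s : ℝ => Real.exp (-s) := by continuity
    have h2 : ContinuousOn (fun s : ℝ => l (Real.exp (-s))) Set.univ :=
      hcont.comp h1.continuousOn (fun s _ => Set.mem_Ioi.mpr (Real.exp_pos _))
    have h3 : Continuous fun s : ℝ => Real.log (l (Real.exp (-s))) := by
      rw [← continuousOn_univ]
      exact h2.log (fun s _ => ne_of_gt (hpos _ (Set.mem_Ioi.mpr (Real.exp_pos _))))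
    exact h3.add (continuous_const.mul continuous_id)
  clear_value H
  -- key existence of almost-maximal scales
  have key : ∀ n : ℕ, ∃ t : ℝ, (n:ℝ) ≤ t ∧ ∀ s : ℝ, |s - t| ≤ (n:ℝ) + 1 →
      H s ≤ H t + Real.log K := by
    intro n
    set m : ℝ := (n:ℝ) + 1 with hmdef
    have hm : 0 < m := by positivity
    set ε : ℝ := Real.log K / m with hεdef
    have hε : 0 < ε := div_pos hδ hm
    have hεm : ε * m = Real.log K := div_mul_cancel₀ _ (ne_of_gt hm)
    clear_value ε m
    obtain ⟨u, hu, hua⟩ := ha (ε/2) (by positivity)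
    set T : ℝ := max 1 (1 - Real.log u) with hTdef
    have hT1 : (1:ℝ) ≤ T := le_max_left _ _
    have hupper : ∀ s : ℝ, T ≤ s → H s ≤ ε/2 * s := by
      intro s hsT
      have hspos : (0:ℝ) < s := by linarith
      have hRlt : Real.exp (-s) < u := by
        rw [← Real.exp_log hu]
        apply Real.exp_lt_exp.mpr
        have h2 : 1 - Real.log u ≤ T := le_max_right _ _
        linarith
      have h1 := hua _ (Real.exp_pos (-s)) hRlt
      have h1' : ζ - ε/2 < Real.log (l (Real.exp (-s))) / (-s) := by
        simpa [hfdef, Real.log_exp] using h1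
      have h2 := (lt_div_iff_of_neg (by linarith : -s < 0)).mp h1'
      have h3 : (ζ - ε/2) * (-s) = -(ζ*s) + ε/2 * s := by ring
      simp only [hHdef]
      nlinarith [h2]
    clear_value T
    obtain ⟨R0, hR0pos, hR0lt, hR0f⟩ := hb (ε/4) (by positivity)
      (2*(T+m) + 2*(n:ℝ) + 2)
    set t0 : ℝ := -Real.log R0 with ht0def
    have hR0eq : Real.exp (-t0) = R0 := by rw [ht0def, neg_neg, Real.exp_log hR0pos]
    have hlogR0 : Real.log R0 = -t0 := by rw [ht0def]; ring
    have ht0C : 2*(T+m) + 2*(n:ℝ) + 2 < t0 := by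
      have hl := Real.log_lt_log hR0pos hR0lt
      rw [Real.log_exp, hlogR0] at hl
      linarith
    have ht0pos : 0 < t0 := by
      have : (0:ℝ) ≤ (n:ℝ) := Nat.cast_nonneg n
      linarith
    have hlower : -(ε/4) * t0 ≤ H t0 := by
      have h1' : Real.log (l R0) / (-t0) < ζ + ε/4 := by
        simpa [hfdef, hlogR0] using hR0f
      have h2 := (div_lt_iff_of_neg (by linarith : -t0 < 0)).mp h1'
      simp only [hHdef, hR0eq]
      nlinarith [h2]
    clear_value t0
    -- maximize ψ on [T, 3 t0]
    set ψ : ℝ → ℝ := fun s => H s - ε * |s - t0| with hψdef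
    clear_value ψ
    have hψcont : ContinuousOn ψ (Set.Icc T (3*t0)) := by
      apply Continuous.continuousOn
      rw [hψdef]
      exact hHcont.sub (continuous_const.mul ((continuous_id.sub continuous_const).abs))
    have ht0mem : t0 ∈ Set.Icc T (3*t0) := ⟨by linarith, by linarith⟩
    obtain ⟨t, htmem, htmax⟩ := isCompact_Icc.exists_isMaxOn ⟨t0, ht0mem⟩ hψcont
    have hψt0 : ψ t0 = H t0 := by simp [hψdef]
    have hψle : ψ t0 ≤ ψ t := htmax ht0mem
    have hHt_ub : H t ≤ ε/2 * t := hupper t htmem.1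
    have habs : |t - t0| ≤ t/2 + t0/4 := by
      have h1 : ε * |t - t0| ≤ ε * (t/2 + t0/4) := by
        have habs0 : |t0 - t0| = (0:ℝ) := by simp
        simp only [hψdef, habs0] at hψle
        have hA : ε * |t - t0| ≤ H t - H t0 := by linarith
        have hB : ε * (t / 2 + t0 / 4) = ε / 2 * t + ε / 4 * t0 + ε * 0 := by ring
        rw [hB]
        linarith
      exact le_of_mul_le_mul_left h1 hε
    have habs' := abs_sub_le_iff.mp habs
    have ht_lb : t0/2 ≤ t := by linarith [habs'.2]
    have ht_ub : t ≤ 5/2 * t0 := by linarith [habs'.1]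
    refine ⟨t, by linarith, ?_⟩
    intro s hs
    have hs' := abs_sub_le_iff.mp hs
    have hsmem : s ∈ Set.Icc T (3*t0) := by
      constructor
      · linarith [hs'.2]
      · linarith [hs'.1]
    have hψs : ψ s ≤ ψ t := htmax hsmem
    have htri : |s - t0| - |t - t0| ≤ |s - t| := by
      have := abs_sub_abs_le_abs_sub (s - t0) (t - t0)
      have heq : (s - t0) - (t - t0) = s - t := by ring
      rwa [heq] at this
    have hεle : ε * (|s - t0| - |t - t0|) ≤ ε * m :=
      mul_le_mul_of_nonneg_left (le_trans htri hs) (le_of_lt hε)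
    simp only [hψdef] at hψs
    linarith [hψs, hεle, hεm]
  choose t ht1 ht2 using key
  refine ⟨fun n => Real.exp (-(t n)), fun n => Real.exp ((n:ℝ)+1),
    fun n => Real.exp_pos _, ?_, ?_, ?_⟩
  · apply squeeze_zero (fun n => (Real.exp_pos _).le)
      (fun n => Real.exp_le_exp.mpr (neg_le_neg (ht1 n)))
    exact Real.tendsto_exp_atBot.comp (tendsto_neg_atBot_iff.mpr tendsto_natCast_atTop_atTop)
  · exact Real.tendsto_exp_atTop.comp
      (tendsto_atTop_add_const_right _ 1 tendsto_natCast_atTop_atTop)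
  · intro n ρ h1 h2
    have hρpos : 0 < ρ :=
      lt_of_lt_of_le (div_pos (Real.exp_pos _) (Real.exp_pos _)) h1
    set s : ℝ := -Real.log ρ with hsdef
    have hexp : Real.exp (-s) = ρ := by rw [hsdef, neg_neg, Real.exp_log hρpos]
    have hsub : |s - t n| ≤ (n:ℝ) + 1 := by
      have h2' : ρ ≤ Real.exp ((n:ℝ)+1) * Real.exp (-(t n)) := h2
      have h1' : Real.exp (-(t n)) / Real.exp ((n:ℝ)+1) ≤ ρ := h1
      have hub : Real.log ρ ≤ (n:ℝ) + 1 - t n := by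
        have he : Real.exp ((n:ℝ)+1) * Real.exp (-(t n))
            = Real.exp ((n:ℝ) + 1 - t n) := by
          rw [← Real.exp_add]; ring_nf
        rw [he] at h2'
        calc Real.log ρ ≤ Real.log (Real.exp ((n:ℝ) + 1 - t n)) :=
              Real.log_le_log hρpos h2'
          _ = (n:ℝ) + 1 - t n := Real.log_exp _
      have hlb : -(t n) - ((n:ℝ) + 1) ≤ Real.log ρ := by
        rw [← Real.exp_sub] at h1'
        calc -(t n) - ((n:ℝ)+1) = Real.log (Real.exp (-(t n) - ((n:ℝ)+1))) :=
              (Real.log_exp _).symm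
          _ ≤ Real.log ρ := Real.log_le_log (Real.exp_pos _) h1'
      rw [abs_sub_le_iff]
      constructor <;> [skip; skip] <;>
        · rw [hsdef]; linarith
    have hkey := ht2 n s hsub
    simp only [hHdef] at hkey
    rw [hexp] at hkey
    have hlρ : 0 < l ρ := hpos ρ (Set.mem_Ioi.mpr hρpos)
    have hlR : 0 < l (Real.exp (-(t n))) := hpos _ (Set.mem_Ioi.mpr (Real.exp_pos _))
    have hratio : (0:ℝ) < ρ / Real.exp (-(t n)) := div_pos hρpos (Real.exp_pos _)
    have hKpos : (0:ℝ) < K := by linarith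
    have hRHS : 0 < K * (ρ / Real.exp (-(t n))) ^ ζ :=
      mul_pos hKpos (Real.rpow_pos_of_pos hratio ζ)
    have hLHS : 0 < l ρ / l (Real.exp (-(t n))) := div_pos hlρ hlR
    rw [← Real.exp_log hLHS, ← Real.exp_log hRHS]
    apply Real.exp_le_exp.mpr
    rw [Real.log_div (ne_of_gt hlρ) (ne_of_gt hlR),
        Real.log_mul (ne_of_gt hKpos) (ne_of_gt (Real.rpow_pos_of_pos hratio ζ)),
        Real.log_rpow hratio,
        Real.log_div (ne_of_gt hρpos) (ne_of_gt (Real.exp_pos _)),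
        Real.log_exp]
    have hlogρ : Real.log ρ = -s := by rw [hsdef, neg_neg]
    rw [hlogρ]
    nlinarith [hkey]
end

section
/- Let γ > 0 and let H : [0, ∞) → ℝ be twice continuously differentiable with H''(ξ) = (γ/3)·ξ·H(ξ) − (ξ²/3)·H'(ξ) for all ξ ≥ 0, H(0) = 0 and H'(0) = 1. Then H'(ξ) > 0 for all ξ ≥ 0; in particular H(ξ) > 0 for all ξ > 0. -/
open Set Filter Topology

theorem stmt17 (γ : ℝ) (hγ : 0 < γ) (H H' : ℝ → ℝ)
    (hH : ∀ ξ : ℝ, 0 ≤ ξ → HasDerivAt H (H' ξ) ξ)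
    (hH' : ∀ ξ : ℝ, 0 ≤ ξ → HasDerivAt H' ((γ/3)*ξ*H ξ - (ξ^2/3)*H' ξ) ξ)
    (hH'cont : ContinuousOn H' (Set.Ici 0))
    (h0 : H 0 = 0) (h1 : H' 0 = 1) :
    (∀ ξ : ℝ, 0 ≤ ξ → 0 < H' ξ) ∧ (∀ ξ : ℝ, 0 < ξ → 0 < H ξ) := by
  have hHcont : ∀ x : ℝ, 0 ≤ x → ContinuousAt H x := fun x hx => (hH x hx).continuousAt
  -- helper: if H' > 0 on interior of [0,c] then H is strictly monotone on [0,c]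
  have mono : ∀ c : ℝ, 0 < c → (∀ x, 0 < x → x < c → 0 < H' x) → 0 < H c := by
    intro c hc hpos
    have hsm : StrictMonoOn H (Icc 0 c) := by
      apply strictMonoOn_of_deriv_pos (convex_Icc 0 c)
      · exact fun x hx => (hHcont x hx.1).continuousWithinAt
      · intro x hx
        rw [interior_Icc] at hx
        rw [(hH x hx.1.le).deriv]
        exact hpos x hx.1 hx.2
    have := hsm (left_mem_Icc.2 hc.le) (right_mem_Icc.2 hc.le) hc
    rwa [h0] at this
  have key : ∀ ξ : ℝ, 0 ≤ ξ → 0 < H' ξ := by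
    by_contra h
    push_neg at h
    obtain ⟨b, hb0, hb⟩ := h
    set s : Set ℝ := Ici 0 ∩ H' ⁻¹' Iic 0 with hsdef
    have hne : s.Nonempty := ⟨b, hb0, hb⟩
    have hbdd : BddBelow s := ⟨0, fun x hx => hx.1⟩
    have hclosed : IsClosed s :=
      hH'cont.preimage_isClosed_of_isClosed isClosed_Ici isClosed_Iic
    set a := sInf s with ha
    have has : a ∈ s := hclosed.csInf_mem hne hbdd
    have ha0 : 0 ≤ a := has.1
    have haneg : H' a ≤ 0 := has.2
    have ha0' : 0 < a := by
      rcases ha0.lt_or_eq with h | h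
      · exact h
      · exfalso; rw [← h, h1] at haneg; linarith
    have hpos : ∀ x, 0 ≤ x → x < a → 0 < H' x := by
      intro x hx hxa
      by_contra hxneg
      push_neg at hxneg
      exact absurd (csInf_le hbdd ⟨hx, hxneg⟩) (not_le.2 hxa)
    have hHa : 0 < H a := mono a ha0' fun x hx hxa => hpos x hx.le hxa
    have hD : 0 < (γ/3)*a*H a - (a^2/3)*H' a := by
      have : 0 < (γ/3)*a*H a := by positivity
      nlinarith [sq_nonneg a]
    -- slope of H' at a from the left is negative, contradicting derivative > 0
    have hslope : Tendsto (slope H' a) (𝓝[<] a) (𝓝 ((γ/3)*a*H a - (a^2/3)*H' a)) :=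
      (hasDerivAt_iff_tendsto_slope.1 (hH' a ha0)).mono_left
        (nhdsWithin_mono _ fun x hx => ne_of_lt hx)
    have hev1 : ∀ᶠ x in 𝓝[<] a, 0 < slope H' a x :=
      hslope.eventually (eventually_gt_nhds hD)
    have hev2 : Ioo 0 a ∈ 𝓝[<] a := Ioo_mem_nhdsLT_of_mem ⟨ha0', le_refl a⟩
    obtain ⟨x, hx1, hx2⟩ := (hev1.and hev2).exists
    have hxpos : 0 < H' x := hpos x hx2.1.le hx2.2
    have : slope H' a x < 0 := by
      rw [slope_def_field]
      apply div_neg_of_pos_of_neg <;> nlinarith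
    linarith
  refine ⟨key, fun ξ hξ => mono ξ hξ fun x hx _ => key x hx.le⟩
end
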